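/- For every random variable X on (Ω,𝓕,P), ∫_{(0,1)} (F^←_X(u))^+ dQ(u) = ∫_{(0,∞)} (1 − D(F_X(x))) dλ(x), where λ is Lebesgue measure and (·)^+ denotes the positive part (both sides taking values in [0,∞]). -/

import Mathlib

open MeasureTheory

/-- The distribution function `F_X(x) = P[X ≤ x]` of a random variable `X`. -/
noncomputable def distFun {Ω : Type*} [MeasurableSpace Ω] (P : Measure Ω) (X : Ω → ℝ) (x : ℝ) : ℝ :=
  (P {ω | X ω ≤ x}).toReal

/-- The (lower) quantile function `F^←_X(u) = inf {x | F_X(x) ≥ u}`. -/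
noncomputable def quantile {Ω : Type*} [MeasurableSpace Ω] (P : Measure Ω) (X : Ω → ℝ) (u : ℝ) : ℝ :=
  sInf {x : ℝ | u ≤ distFun P X x}

/-- A distortion function: an increasing, right-continuous `D : [0,1] → [0,1]`
with `D 0 = 0` and `sup_{u ∈ (0,1)} D u = 1`. -/
structure IsDistortion (D : ℝ → ℝ) : Prop where
  mapsTo : ∀ u ∈ Set.Icc (0:ℝ) 1, D u ∈ Set.Icc (0:ℝ) 1
  mono : ∀ ⦃a b : ℝ⦄, 0 ≤ a → a ≤ b → b ≤ 1 → D a ≤ D b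
  rightCont : ∀ u ∈ Set.Ico (0:ℝ) 1, ContinuousWithinAt D (Set.Icc u 1) u
  zero : D 0 = 0
  sup_one : sSup (D '' Set.Ioo 0 1) = 1

/-- `Q` is the probability measure on the Borel sets of `(0,1)` corresponding to
the distortion function `D`, i.e. `Q (a,b] = D b - D a` for `0 < a ≤ b < 1`. -/
def IsCorresponding (D : ℝ → ℝ) (Q : Measure ℝ) : Prop :=
  IsProbabilityMeasure Q ∧ Q (Set.Ioo (0:ℝ) 1) = 1 ∧
    ∀ a b : ℝ, 0 < a → a ≤ b → b < 1 → Q (Set.Ioc a b) = ENNReal.ofReal (D b - D a)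

open Set Filter Topology
open scoped ENNReal

section Aux

variable {Ω : Type*} [MeasurableSpace Ω] (P : Measure Ω) [IsProbabilityMeasure P] (X : Ω → ℝ)

lemma distFun_mono : Monotone (distFun P X) := fun a b hab =>
  ENNReal.toReal_mono (measure_ne_top P _) (measure_mono (fun _ h => le_trans h hab))

lemma distFun_nonneg (x : ℝ) : 0 ≤ distFun P X x := ENNReal.toReal_nonneg

lemma distFun_le_one (x : ℝ) : distFun P X x ≤ 1 := by
  have : (P {ω | X ω ≤ x}).toReal ≤ (P Set.univ).toReal :=
    ENNReal.toReal_mono (measure_ne_top P _) (measure_mono (subset_univ _))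
  simpa [distFun, measure_univ] using this

variable {X}

/-- Right-continuity consequence: if `F x < u`, there is `x' > x` with `F x' < u`. -/
lemma exists_right (hX : Measurable X) {x u : ℝ} (h : distFun P X x < u) :
    ∃ x' > x, distFun P X x' < u := by
  have hanti : Antitone fun n : ℕ => {ω | X ω ≤ x + 1 / (n + 1)} := by
    intro m n hmn ω hω
    simp only [mem_setOf_eq] at hω ⊢
    have h2 : 1 / ((n:ℝ) + 1) ≤ 1 / ((m:ℝ) + 1) :=
      one_div_le_one_div_of_le (by positivity) (by exact_mod_cast Nat.succ_le_succ hmn)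
    linarith
  have hInter : (⋂ n : ℕ, {ω | X ω ≤ x + 1 / (n + 1)}) = {ω | X ω ≤ x} := by
    ext ω
    simp only [mem_iInter, mem_setOf_eq]
    constructor
    · intro h'
      refine le_of_forall_pos_le_add fun ε hε => ?_
      obtain ⟨n, hn⟩ := exists_nat_one_div_lt hε
      exact (h' n).trans (by linarith [hn])
    · intro h' n
      have : (0:ℝ) < 1 / ((n:ℝ) + 1) := by positivity
      linarith
  have htend : Tendsto (fun n : ℕ => P {ω | X ω ≤ x + 1 / (n + 1)}) atTop
      (𝓝 (P {ω | X ω ≤ x})) := by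
    have := tendsto_measure_iInter_atTop (μ := P)
      (s := fun n : ℕ => {ω | X ω ≤ x + 1 / (n + 1)})
      (fun n => (hX measurableSet_Iic).nullMeasurableSet) hanti ⟨0, measure_ne_top P _⟩
    rw [hInter] at this
    simpa [Function.comp_def] using this
  have htoReal : Tendsto (fun n : ℕ => distFun P X (x + 1 / (n + 1))) atTop
      (𝓝 (distFun P X x)) :=
    (ENNReal.tendsto_toReal (measure_ne_top P _)).comp htend
  have hev : ∀ᶠ n : ℕ in atTop, distFun P X (x + 1 / (n + 1)) < u :=
    htoReal.eventually (Iio_mem_nhds h)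
  obtain ⟨n, hn⟩ := hev.exists
  refine ⟨x + 1 / (n + 1), lt_add_of_pos_right x (by positivity), hn⟩

lemma exists_distFun_ge (hX : Measurable X) {u : ℝ} (hu : u < 1) :
    ∃ y : ℝ, u ≤ distFun P X y := by
  have hmono : Monotone fun n : ℕ => {ω | X ω ≤ (n : ℝ)} := by
    intro m n hmn ω hω
    simp only [mem_setOf_eq] at hω ⊢
    exact le_trans hω (by exact_mod_cast hmn)
  have hUnion : (⋃ n : ℕ, {ω | X ω ≤ (n : ℝ)}) = Set.univ := by
    ext ω
    simp only [mem_iUnion, mem_setOf_eq, mem_univ, iff_true]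
    exact exists_nat_ge (X ω)
  have htend : Tendsto (fun n : ℕ => P {ω | X ω ≤ (n : ℝ)}) atTop (𝓝 1) := by
    have := tendsto_measure_iUnion_atTop (μ := P)
      (s := fun n : ℕ => {ω | X ω ≤ (n : ℝ)}) hmono
    rw [hUnion, measure_univ] at this
    simpa [Function.comp_def] using this
  have htoReal : Tendsto (fun n : ℕ => distFun P X n) atTop (𝓝 1) := by
    have h1 : Tendsto (fun n : ℕ => (P {ω | X ω ≤ (n : ℝ)}).toReal) atTop
        (𝓝 ((1 : ℝ≥0∞).toReal)) := (ENNReal.tendsto_toReal ENNReal.one_ne_top).comp htend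
    simpa [distFun] using h1
  obtain ⟨n, hn⟩ := (htoReal.eventually (Ioi_mem_nhds hu)).exists
  exact ⟨n, le_of_lt hn⟩

lemma exists_distFun_lt (hX : Measurable X) {u : ℝ} (hu : 0 < u) :
    ∃ y : ℝ, distFun P X y < u := by
  have hanti : Antitone fun n : ℕ => {ω | X ω ≤ -(n : ℝ)} := by
    intro m n hmn ω hω
    simp only [mem_setOf_eq] at hω ⊢
    have : (m:ℝ) ≤ n := by exact_mod_cast hmn
    linarith
  have hInter : (⋂ n : ℕ, {ω | X ω ≤ -(n : ℝ)}) = (∅ : Set Ω) := by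
    ext ω
    simp only [mem_iInter, mem_setOf_eq, mem_empty_iff_false, iff_false, not_forall, not_le]
    obtain ⟨n, hn⟩ := exists_nat_gt (-X ω)
    exact ⟨n, by linarith⟩
  have htend : Tendsto (fun n : ℕ => P {ω | X ω ≤ -(n : ℝ)}) atTop (𝓝 0) := by
    have := tendsto_measure_iInter_atTop (μ := P)
      (s := fun n : ℕ => {ω | X ω ≤ -(n : ℝ)})
      (fun n => (hX measurableSet_Iic).nullMeasurableSet) hanti ⟨0, measure_ne_top P _⟩
    rw [hInter, measure_empty] at this
    simpa [Function.comp_def] using this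
  have htoReal : Tendsto (fun n : ℕ => distFun P X (-(n : ℝ))) atTop (𝓝 0) := by
    have h1 : Tendsto (fun n : ℕ => (P {ω | X ω ≤ -(n : ℝ)}).toReal) atTop
        (𝓝 ((0 : ℝ≥0∞).toReal)) := (ENNReal.tendsto_toReal ENNReal.zero_ne_top).comp htend
    simpa [distFun] using h1
  obtain ⟨n, hn⟩ := (htoReal.eventually (Iio_mem_nhds hu)).exists
  exact ⟨-(n : ℝ), hn⟩

/-- Key fact: for `u ∈ (0,1)`, `x < F⁻(u) ↔ F x < u`. -/
lemma lt_quantile_iff (hX : Measurable X) {u x : ℝ} (hu0 : 0 < u) (hu1 : u < 1) :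
    x < quantile P X u ↔ distFun P X x < u := by
  obtain ⟨y0, hy0⟩ := exists_distFun_lt P hX hu0
  have hbdd : BddBelow {x : ℝ | u ≤ distFun P X x} := by
    refine ⟨y0, fun s hs => ?_⟩
    by_contra hc
    push_neg at hc
    exact absurd (le_trans hs (distFun_mono P X hc.le)) (not_le.2 hy0)
  constructor
  · intro h
    by_contra hc
    push_neg at hc
    exact absurd (csInf_le hbdd hc) (not_le.2 h)
  · intro h
    obtain ⟨x', hx', hFx'⟩ := exists_right P hX h
    obtain ⟨y, hy⟩ := exists_distFun_ge P hX hu1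
    refine lt_of_lt_of_le hx' (le_csInf ⟨y, hy⟩ fun s hs => ?_)
    by_contra hc
    push_neg at hc
    exact absurd (le_trans hs (distFun_mono P X hc.le)) (not_le.2 hFx')

end Aux

lemma ofReal_max_zero (t : ℝ) : ENNReal.ofReal (max t 0) = ENNReal.ofReal t := by
  rcases le_total t 0 with h | h
  · rw [max_eq_right h, ENNReal.ofReal_zero, ENNReal.ofReal_of_nonpos h]
  · rw [max_eq_left h]

lemma distortion_one {D : ℝ → ℝ} (hD : IsDistortion D) : D 1 = 1 := by
  have hub : D 1 ≤ 1 := (hD.mapsTo 1 ⟨zero_le_one, le_refl 1⟩).2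
  have hle : sSup (D '' Set.Ioo 0 1) ≤ D 1 := by
    refine csSup_le ⟨D (1/2), mem_image_of_mem _ (by norm_num)⟩ ?_
    rintro v ⟨c, hc, rfl⟩
    exact hD.mono hc.1.le hc.2.le le_rfl
  rw [hD.sup_one] at hle
  linarith

/-- `Q (a, 1) = 1 - D a` for `a ∈ [0, 1]`. -/
lemma Q_Ioo_one {D : ℝ → ℝ} {Q : Measure ℝ} (hD : IsDistortion D) (hQ : IsCorresponding D Q)
    {a : ℝ} (ha0 : 0 ≤ a) (ha1 : a ≤ 1) :
    Q (Set.Ioo a 1) = ENNReal.ofReal (1 - D a) := by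
  obtain ⟨hQprob, hQ1, hQab⟩ := hQ
  rcases eq_or_lt_of_le ha0 with rfl | ha0'
  · rw [hQ1, hD.zero]; simp
  rcases eq_or_lt_of_le ha1 with rfl | ha1'
  · rw [distortion_one hD]; simp
  -- now 0 < a < 1
  set b : ℕ → ℝ := fun n => 1 - (1 - a) / (n + 2) with hb
  have ha' : (0:ℝ) < 1 - a := by linarith
  have hble : ∀ n, a ≤ b n := by
    intro n
    have h2 : (1 - a) / (n + 2) ≤ (1 - a) / 1 := by
      apply div_le_div_of_nonneg_left ha'.le one_pos
      push_cast; linarith [Nat.cast_nonneg (α := ℝ) n]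
    simp only [hb]; linarith [h2]
  have hblt : ∀ n, b n < 1 := by
    intro n
    have : (0:ℝ) < (1 - a) / (n + 2) := by positivity
    simp only [hb]; linarith
  have hbmono : Monotone b := by
    intro m n hmn
    simp only [hb, sub_le_sub_iff_left]
    apply div_le_div_of_nonneg_left ha'.le (by positivity)
    push_cast; have : (m:ℝ) ≤ n := by exact_mod_cast hmn
    linarith
  have hbge : ∀ c : ℝ, c < 1 → ∃ n : ℕ, c ≤ b n := by
    intro c hc
    obtain ⟨n, hn⟩ := exists_nat_ge ((1 - a) / (1 - c))
    refine ⟨n, ?_⟩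
    have hc' : (0:ℝ) < 1 - c := by linarith
    have h1 : (1 - a) / (n + 2) ≤ 1 - c := by
      rw [div_le_iff₀ (by positivity)]
      have h2 : (1 - a) / (1 - c) ≤ (n:ℝ) + 2 := by linarith
      calc (1 - a) = (1 - a) / (1 - c) * (1 - c) := by field_simp
        _ ≤ ((n:ℝ) + 2) * (1 - c) := by
            apply mul_le_mul_of_nonneg_right h2 hc'.le
        _ = (1 - c) * ((n:ℝ) + 2) := by ring
    simp only [hb]; linarith
  have hUnion : (⋃ n : ℕ, Set.Ioc a (b n)) = Set.Ioo a 1 := by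
    ext x
    simp only [Set.mem_iUnion, Set.mem_Ioc, Set.mem_Ioo]
    constructor
    · rintro ⟨n, h1, h2⟩
      exact ⟨h1, lt_of_le_of_lt h2 (hblt n)⟩
    · rintro ⟨h1, h2⟩
      obtain ⟨n, hn⟩ := hbge x h2
      exact ⟨n, h1, hn⟩
  have hmonoSets : Monotone fun n => Set.Ioc a (b n) :=
    fun m n hmn => Set.Ioc_subset_Ioc_right (hbmono hmn)
  have htendQ : Tendsto (fun n => Q (Set.Ioc a (b n))) atTop (𝓝 (Q (Set.Ioo a 1))) := by
    have := tendsto_measure_iUnion_atTop (μ := Q) hmonoSets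
    rw [hUnion] at this
    exact this
  -- D (b n) → 1
  have hDbmono : Monotone fun n => D (b n) := fun m n hmn =>
    hD.mono (le_trans ha0 (hble m)) (hbmono hmn) (hblt n).le
  have hDbbdd : BddAbove (Set.range fun n => D (b n)) := by
    refine ⟨1, ?_⟩
    rintro v ⟨n, rfl⟩
    exact (hD.mapsTo (b n) ⟨le_trans ha0 (hble n), (hblt n).le⟩).2
  have hDtendsup : Tendsto (fun n => D (b n)) atTop (𝓝 (⨆ n, D (b n))) :=
    tendsto_atTop_ciSup hDbmono hDbbdd
  have hsup : (⨆ n, D (b n)) = 1 := by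
    apply le_antisymm
    · exact ciSup_le fun n => (hD.mapsTo (b n) ⟨le_trans ha0 (hble n), (hblt n).le⟩).2
    · rw [← hD.sup_one]
      refine csSup_le ⟨D (1/2), Set.mem_image_of_mem _ (by norm_num)⟩ ?_
      rintro v ⟨c, hc, rfl⟩
      obtain ⟨n, hn⟩ := hbge c hc.2
      exact le_trans (hD.mono hc.1.le hn (hblt n).le) (le_ciSup hDbbdd n)
  rw [hsup] at hDtendsup
  have htend2 : Tendsto (fun n => Q (Set.Ioc a (b n))) atTop
      (𝓝 (ENNReal.ofReal (1 - D a))) := by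
    have heq : ∀ n, Q (Set.Ioc a (b n)) = ENNReal.ofReal (D (b n) - D a) :=
      fun n => hQab a (b n) ha0' (hble n) (hblt n)
    simp_rw [heq]
    exact (ENNReal.continuous_ofReal.tendsto _).comp (hDtendsup.sub tendsto_const_nhds)
  exact tendsto_nhds_unique htendQ htend2

/-- `∫_{(0,1)} (F^←_X(u))⁺ dQ(u) = ∫_{(0,∞)} (1 - D(F_X(x))) dλ(x)` in `[0,∞]`. -/
theorem lintegral_quantile_pos_part {Ω : Type*} [MeasurableSpace Ω]
    (P : Measure Ω) [IsProbabilityMeasure P] (D : ℝ → ℝ) (Q : Measure ℝ)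
    (hD : IsDistortion D) (hQ : IsCorresponding D Q)
    (X : Ω → ℝ) (hX : Measurable X) :
    ∫⁻ u in Set.Ioo (0:ℝ) 1, ENNReal.ofReal (max (quantile P X u) 0) ∂Q
      = ∫⁻ x in Set.Ioi (0:ℝ), ENNReal.ofReal (1 - D (distFun P X x)) := by
  have hQprob : IsProbabilityMeasure Q := hQ.1
  set F := distFun P X with hF
  have hFmeas : Measurable F := (distFun_mono P X).measurable
  set f : ℝ → ℝ → ℝ≥0∞ := fun u x => Set.indicator {p : ℝ | F p < u} 1 x with hf
  have hfmeas : Measurable (Function.uncurry f) := by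
    have heq : Function.uncurry f =
        Set.indicator {p : ℝ × ℝ | F p.2 < p.1} 1 := by
      ext p
      simp only [Function.uncurry, hf, Set.indicator_apply, Set.mem_setOf_eq, Pi.one_apply]
    rw [heq]
    exact (measurable_const.indicator
      (measurableSet_lt (hFmeas.comp measurable_snd) measurable_fst))
  have h1 : ∀ u ∈ Set.Ioo (0:ℝ) 1,
      ENNReal.ofReal (max (quantile P X u) 0) = ∫⁻ x in Set.Ioi (0:ℝ), f u x := by
    intro u hu
    have hset : {p : ℝ | F p < u} = Set.Iio (quantile P X u) := by
      ext x
      simp only [Set.mem_setOf_eq, Set.mem_Iio]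
      exact (lt_quantile_iff P hX hu.1 hu.2).symm
    rw [hf]
    simp only [hset]
    rw [lintegral_indicator_one measurableSet_Iio,
      Measure.restrict_apply measurableSet_Iio, Set.inter_comm, Set.Ioi_inter_Iio,
      Real.volume_Ioo, ofReal_max_zero, sub_zero]
  have h2 : ∀ x : ℝ, ∫⁻ u in Set.Ioo (0:ℝ) 1, f u x ∂Q = ENNReal.ofReal (1 - D (F x)) := by
    intro x
    have hfx : (fun u => f u x) = Set.indicator (Set.Ioi (F x)) 1 := by
      ext u
      simp only [hf, Set.indicator_apply, Set.mem_setOf_eq, Set.mem_Ioi, Pi.one_apply]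
    rw [hfx, lintegral_indicator_one measurableSet_Ioi,
      Measure.restrict_apply measurableSet_Ioi]
    have hinter : Set.Ioi (F x) ∩ Set.Ioo 0 1 = Set.Ioo (F x) 1 := by
      ext u
      simp only [Set.mem_inter_iff, Set.mem_Ioi, Set.mem_Ioo]
      constructor
      · rintro ⟨h1', h2', h3'⟩; exact ⟨h1', h3'⟩
      · rintro ⟨h1', h2'⟩
        exact ⟨h1', lt_of_le_of_lt (distFun_nonneg P X x) h1', h2'⟩
    rw [hinter]
    exact Q_Ioo_one hD hQ (distFun_nonneg P X x) (distFun_le_one P X x)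
  calc ∫⁻ u in Set.Ioo (0:ℝ) 1, ENNReal.ofReal (max (quantile P X u) 0) ∂Q
      = ∫⁻ u in Set.Ioo (0:ℝ) 1, (∫⁻ x in Set.Ioi (0:ℝ), f u x) ∂Q :=
        setLIntegral_congr_fun measurableSet_Ioo h1
    _ = ∫⁻ x in Set.Ioi (0:ℝ), (∫⁻ u in Set.Ioo (0:ℝ) 1, f u x ∂Q) :=
        lintegral_lintegral_swap hfmeas.aemeasurable
    _ = ∫⁻ x in Set.Ioi (0:ℝ), ENNReal.ofReal (1 - D (distFun P X x)) := by
        apply lintegral_congr fun x => h2 x
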